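/- (Gessel–Viennot identity) For nonnegative integers n < k, sum_{j=0}^{floor((k-1)/2)} (1/(k-j)) * binomial(2k-2j, k+1) * binomial(2n+1, 2j+1) * B_{2n-2j} = ((2n+1)/(2k-2n+1)) * binomial(2k-2n+1, k+1). -/

import Mathlib

open Finset

section GVAux
open Polynomial PowerSeries

lemma Cs_ne_zero' : True := trivial

noncomputable def Cs : PowerSeries ℚ := PowerSeries.mk fun s => (catalan s : ℚ)

lemma Cs_eq : Cs = 1 + PowerSeries.X * Cs ^ 2 := by
  ext s
  cases s with
  | zero => simp [Cs]
  | succ s =>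
    rw [map_add, PowerSeries.coeff_succ_X_mul]
    simp only [Cs, PowerSeries.coeff_mk, pow_two, PowerSeries.coeff_mul, coeff_mk]
    rw [catalan_succ' s]
    push_cast
    simp [PowerSeries.coeff_one]

lemma constCoeff_Cs : PowerSeries.constantCoeff (R := ℚ) Cs = 1 := by simp [Cs]

lemma Cs_ne_zero : Cs ≠ 0 := by
  intro hzero
  have h1 := constCoeff_Cs
  rw [hzero] at h1
  simp at h1

lemma Cs_key (a : ℕ) : Cs ^ (a + 1) = Cs ^ a + PowerSeries.X * Cs ^ (a + 2) := by
  rw [pow_succ]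
  nth_rewrite 2 [Cs_eq]
  ring

lemma ballot : ∀ s a : ℕ, PowerSeries.coeff (R := ℚ) s (Cs ^ (a + 1)) =
    ((a : ℚ) + 1) / (2 * s + a + 1) * ((2 * s + a + 1).choose s : ℚ) := by
  intro s
  induction s using Nat.strong_induction_on with
  | _ s ih =>
    match s with
    | 0 =>
      intro a
      have : PowerSeries.coeff (R := ℚ) 0 (Cs ^ (a+1)) = 1 := by
        rw [PowerSeries.coeff_zero_eq_constantCoeff_apply, map_pow]
        simp [Cs]
      rw [this]
      have ha : ((a : ℚ) + 1) ≠ 0 := by positivity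
      simp [ha]
    | s + 1 =>
      intro a
      induction a with
      | zero =>
        rw [Cs_key 0, map_add, pow_zero, PowerSeries.coeff_succ_X_mul,
          PowerSeries.coeff_one, ih s (by omega) 1]
        have h1 : ((2*s+3) * ((2*(s:ℕ)+1+1).choose s) : ℕ) = (2*s+2+1).choose (s+1) * (s+1) :=
          Nat.add_one_mul_choose_eq (2*s+2) s
        have h1q : ((2*(s:ℚ)+3)) * (((2*s+1+1).choose s : ℕ) : ℚ)
            = (((2*s+2+1).choose (s+1) : ℕ) : ℚ) * ((s:ℚ)+1) := by exact_mod_cast h1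
        have d1 : (2*(s:ℚ) + 1 + 1) ≠ 0 := by positivity
        have d2 : (2*((s:ℚ)+1) + 0 + 1) ≠ 0 := by positivity
        push_cast at h1q ⊢
        field_simp
        ring_nf
        ring_nf at h1q
        linear_combination 2 * h1q
      | succ a iha =>
        rw [Cs_key (a+1), map_add, PowerSeries.coeff_succ_X_mul, iha, ih s (by omega) (a+2)]
        have e1 : 2*(s+1)+a+1 = 2*s+a+3 := by ring
        have e2 : 2*s+(a+2)+1 = 2*s+a+3 := by ring
        have e3 : 2*(s+1)+(a+1)+1 = 2*s+a+4 := by ring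
        rw [e1, e2, e3]
        have hP : (2*s+a+4).choose (s+1) = (2*s+a+3).choose s + (2*s+a+3).choose (s+1) := by
          rw [show 2*s+a+4 = (2*s+a+3).succ by omega]
          exact Nat.choose_succ_succ _ s
        have hQ := Nat.choose_succ_right_eq (2*s+a+3) s
        rw [show 2*s+a+3-s = s+a+3 by omega] at hQ
        rw [hP]
        have qQ : ((2*s+a+3).choose (s+1) : ℚ) * ((s:ℚ)+1)
            = ((2*s+a+3).choose s : ℚ) * ((s:ℚ)+(a:ℚ)+3) := by exact_mod_cast hQ
        have d1 : (2*(s:ℚ)+(a:ℚ)+3) ≠ 0 := by positivity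
        have d2 : (2*(s:ℚ)+(a:ℚ)+4) ≠ 0 := by positivity
        push_cast
        have d1' : (2*((s:ℚ)+1)+(a:ℚ)+1) ≠ 0 := by intro hc; apply d1; linarith
        have d2' : (2*((s:ℚ)+1)+((a:ℚ)+1)+1) ≠ 0 := by intro hc; apply d2; linarith
        field_simp
        ring_nf
        ring_nf at qQ
        linear_combination (-2*(2*(s:ℚ)+a+3)) * qQ

lemma sum_range_even_odd (f : ℕ → ℚ) (N : ℕ) :
    ∑ i ∈ range (2*N+1), f i = (∑ i ∈ range (N+1), f (2*i)) + ∑ i ∈ range N, f (2*i+1) := by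
  induction N with
  | zero => simp
  | succ N ih =>
    rw [show 2*(N+1)+1 = (2*N+1)+1+1 by ring]
    rw [sum_range_succ, sum_range_succ, ih, sum_range_succ (fun i => f (2*i)) (N+1),
      sum_range_succ (fun i => f (2*i+1)) N]
    rw [show 2*N+1+1 = 2*(N+1) by ring]
    ring

lemma eval_bern_sum (m : ℕ) (x : ℚ) : (Polynomial.bernoulli m).eval x
    = ∑ i ∈ range (m+1), _root_.bernoulli i * (m.choose i : ℚ) * x^(m-i) := by
  rw [Polynomial.bernoulli, Polynomial.eval_finset_sum]
  exact Finset.sum_congr rfl fun i _ => by rw [Polynomial.eval_monomial]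

lemma even_sum_F (n : ℕ) (A y : ℚ) (hA : A ≠ 0) :
    ∑ i ∈ range (n+2), _root_.bernoulli (2*i) * ((2*n+2).choose (2*i) : ℚ) * y^(2*n+2-2*i) * A^(2*i)
    = A^(2*n+2) * (Polynomial.bernoulli (2*n+2)).eval (y/A) + (n+1 : ℚ) * y^(2*n+1) * A := by
  have key : A^(2*n+2) * (Polynomial.bernoulli (2*n+2)).eval (y/A)
      = ∑ i ∈ range (2*n+3), _root_.bernoulli i * ((2*n+2).choose i : ℚ) * y^(2*n+2-i) * A^i := by
    rw [eval_bern_sum, Finset.mul_sum]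
    refine Finset.sum_congr (by norm_num) fun i hi => ?_
    have hi' : i ≤ 2*n+2 := by simpa [Nat.lt_succ_iff] using hi
    have : A^(2*n+2) = A^(2*n+2-i) * A^i := by
      rw [← pow_add]; congr 1; omega
    rw [div_pow, this]
    field_simp
  rw [key, show 2*n+3 = 2*(n+1)+1 by ring, sum_range_even_odd]
  have hodd : ∑ i ∈ range (n+1),
      _root_.bernoulli (2*i+1) * ((2*n+2).choose (2*i+1) : ℚ) * y^(2*n+2-(2*i+1)) * A^(2*i+1)
      = -(n+1 : ℚ) * y^(2*n+1) * A := by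
    rw [Finset.sum_eq_single 0]
    · norm_num [_root_.bernoulli_one]
      ring
    · intro i _ hi0
      have h1 : _root_.bernoulli (2*i+1) = 0 := by
        rw [bernoulli_eq_bernoulli'_of_ne_one (by omega)]
        exact bernoulli'_eq_zero_of_odd ⟨i, by omega⟩ (by omega)
      simp [h1]
    · simp
  rw [hodd]
  ring

lemma bern_comp (m : ℕ) : (Polynomial.bernoulli m).comp (1 - Polynomial.X) =
    (-1 : ℚ[X]) ^ m * Polynomial.bernoulli m := by
  induction m with
  | zero => simp
  | succ n ihn =>
    have hd : Polynomial.derivative ((Polynomial.bernoulli (n+1)).comp (1 - Polynomial.X)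
        - (-1 : ℚ[X])^(n+1) * Polynomial.bernoulli (n+1)) = 0 := by
      rw [Polynomial.derivative_sub, Polynomial.derivative_comp, Polynomial.derivative_mul]
      simp only [Polynomial.derivative_bernoulli_add_one, Polynomial.derivative_pow,
        Polynomial.derivative_neg, Polynomial.derivative_one,
        neg_zero, mul_zero, zero_mul, zero_add, Polynomial.derivative_sub, Polynomial.derivative_X,
        zero_sub, Polynomial.mul_comp, Polynomial.natCast_comp, Polynomial.add_comp,
        Polynomial.one_comp, ihn]
      ring
    have hc := Polynomial.eq_C_of_derivative_eq_zero hd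
    have he : ((Polynomial.bernoulli (n+1)).comp (1 - Polynomial.X)
        - (-1 : ℚ[X])^(n+1) * Polynomial.bernoulli (n+1)).eval 0 = 0 := by
      simp [Polynomial.eval_comp, bernoulli'_eq_bernoulli]
    rw [hc, Polynomial.eval_C] at he
    rw [he, Polynomial.C_0] at hc
    exact sub_eq_zero.mp hc

lemma bern_eval_one_sub (m : ℕ) (x : ℚ) :
    (Polynomial.bernoulli m).eval (1 - x) = (-1:ℚ)^m * (Polynomial.bernoulli m).eval x := by
  have h := congrArg (Polynomial.eval x) (bern_comp m)
  simpa [Polynomial.eval_comp] using h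

lemma clubs_scalar (n : ℕ) (q : ℚ) :
    ∑ j ∈ range (n+1), _root_.bernoulli (2*n-2*j) * (((2*n+1).choose (2*j+1) : ℚ)) / ((j:ℚ)+1)
      * ((q^(2*j+2) - 1) * (1+q)^(2*n-2*j))
    = (1+q) * (q^(2*n+1) - 1) := by
  by_cases hq : q = -1
  · subst hq
    rw [Finset.sum_eq_zero, ]
    · norm_num
    · intro j hj
      rw [Finset.mem_range] at hj
      by_cases hjn : j = n
      · subst hjn
        have : ((-1:ℚ))^(2*j+2) = 1 := by
          rw [show 2*j+2 = 2*(j+1) by ring, pow_mul]; norm_num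
        simp [this]
      · have hlt : 0 < 2*n - 2*j := by omega
        have hz : (1 + (-1:ℚ))^(2*n-2*j) = 0 := by
          rw [show (1 + (-1:ℚ)) = 0 by norm_num, zero_pow (by omega)]
        rw [hz, mul_zero, mul_zero]
  · have hA : (1 + q) ≠ 0 := fun hc => hq (by linarith)
    set A := 1 + q with hAdef
    have hc : ∀ j ∈ range (n+1), (((2*n+1).choose (2*j+1) : ℚ)) / ((j:ℚ)+1)
        = ((2*n+2).choose (2*j+2) : ℚ) / ((n:ℚ)+1) := by
      intro j _
      have h := Nat.add_one_mul_choose_eq (2*n+1) (2*j+1)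
      have hq' : ((2*n+1+1 : ℕ) : ℚ) * ((2*n+1).choose (2*j+1) : ℚ)
          = ((2*n+2).choose (2*j+2) : ℚ) * ((2*j+1+1 : ℕ) : ℚ) := by exact_mod_cast h
      push_cast at hq'
      have d1 : ((j:ℚ)+1) ≠ 0 := by positivity
      have d2 : ((n:ℚ)+1) ≠ 0 := by positivity
      field_simp
      linear_combination ((1:ℚ)/2) * hq'
    rw [Finset.sum_congr rfl (fun j hj => by rw [mul_div_assoc, hc j hj, ← mul_div_assoc])]
    have expand : ∑ j ∈ range (n+1), _root_.bernoulli (2*n-2*j) * ((2*n+2).choose (2*j+2) : ℚ)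
        / ((n:ℚ)+1) * ((q^(2*j+2) - 1) * A^(2*n-2*j))
        = (1/((n:ℚ)+1)) * (
          (∑ j ∈ range (n+1), _root_.bernoulli (2*n-2*j) * ((2*n+2).choose (2*j+2) : ℚ)
            * q^(2*j+2) * A^(2*n-2*j))
          - ∑ j ∈ range (n+1), _root_.bernoulli (2*n-2*j) * ((2*n+2).choose (2*j+2) : ℚ)
            * (1:ℚ)^(2*j+2) * A^(2*n-2*j)) := by
      rw [← Finset.sum_sub_distrib, Finset.mul_sum]
      exact Finset.sum_congr rfl fun j _ => by ring
    rw [expand]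
    -- reindex both inner sums
    have reindex : ∀ y : ℚ, ∑ j ∈ range (n+1), _root_.bernoulli (2*n-2*j)
          * ((2*n+2).choose (2*j+2) : ℚ) * y^(2*j+2) * A^(2*n-2*j)
        = ∑ i ∈ range (n+1), _root_.bernoulli (2*i) * ((2*n+2).choose (2*i) : ℚ)
          * y^(2*n+2-2*i) * A^(2*i) := by
      intro y
      rw [← Finset.sum_range_reflect (fun i => _root_.bernoulli (2*i)
        * ((2*n+2).choose (2*i) : ℚ) * y^(2*n+2-2*i) * A^(2*i)) (n+1)]
      refine Finset.sum_congr rfl fun j hj => ?_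
      rw [Finset.mem_range] at hj
      have e1 : 2*(n+1-1-j) = 2*n-2*j := by omega
      rw [e1]
      rw [show 2*n+2-(2*n-2*j) = 2*j+2 by omega]
      have e3 : (2*n+2).choose (2*n-2*j) = (2*n+2).choose (2*j+2) := by
        rw [show 2*n-2*j = 2*n+2 - (2*j+2) by omega]
        exact Nat.choose_symm (by omega)
      rw [e3]
    rw [reindex q, reindex 1]
    have ext : ∀ y : ℚ, ∑ i ∈ range (n+1), _root_.bernoulli (2*i) * ((2*n+2).choose (2*i) : ℚ)
          * y^(2*n+2-2*i) * A^(2*i)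
        = A^(2*n+2) * (Polynomial.bernoulli (2*n+2)).eval (y/A) + (n+1 : ℚ) * y^(2*n+1) * A
          - _root_.bernoulli (2*n+2) * A^(2*n+2) := by
      intro y
      have h := even_sum_F n A y hA
      rw [Finset.sum_range_succ] at h
      have e4 : 2*n+2-2*(n+1) = 0 := by omega
      rw [e4, show 2*(n+1) = 2*n+2 by ring] at h
      simp only [pow_zero, Nat.choose_self, Nat.cast_one, mul_one, one_mul] at h
      linarith [h]
    rw [ext q, ext 1]
    have refl : (Polynomial.bernoulli (2*n+2)).eval (1/A) =
        (Polynomial.bernoulli (2*n+2)).eval (q/A) := by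
      have e5 : (1:ℚ)/A = 1 - q/A := by field_simp; ring
      rw [e5, bern_eval_one_sub]
      have : ((-1:ℚ))^(2*n+2) = 1 := by
        rw [show 2*n+2 = 2*(n+1) by ring, pow_mul]; norm_num
      rw [this, one_mul]
    rw [refl]
    have dn : ((n:ℚ)+1) ≠ 0 := by positivity
    field_simp
    ring

noncomputable def cc (n j : ℕ) : ℚ :=
  _root_.bernoulli (2*n-2*j) * (((2*n+1).choose (2*j+1) : ℚ)) / ((j:ℚ)+1)

lemma clubs_scalar' (n : ℕ) (q : ℚ) :
    ∑ j ∈ range (n+1), cc n j * ((q^(2*j+2) - 1) * (1+q)^(2*n-2*j))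
    = (1+q) * (q^(2*n+1) - 1) := by
  unfold cc
  exact clubs_scalar n q

lemma clubs_poly (n : ℕ) :
    ∑ j ∈ range (n+1), Polynomial.C (cc n j) *
      ((Polynomial.X^(2*j+2) - 1) * (1+Polynomial.X)^(2*n-2*j))
    = (1+Polynomial.X) * (Polynomial.X^(2*n+1) - 1) := by
  apply Polynomial.funext
  intro q
  rw [Polynomial.eval_finset_sum]
  simp only [Polynomial.eval_mul, Polynomial.eval_sub, Polynomial.eval_pow, Polynomial.eval_add,
    Polynomial.eval_one, Polynomial.eval_X, Polynomial.eval_C]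
  exact clubs_scalar' n q

noncomputable def Bpoly (n : ℕ) : ℚ[X] :=
  ∑ j ∈ range (n+1), Polynomial.C (cc n j) * (1+Polynomial.X)^(2*n-2*j)

noncomputable def Phi (n : ℕ) : ℚ[X] :=
  ∑ j ∈ range (n+1), Polynomial.C (cc n j) * ((1+Polynomial.X)^(2*n-2*j) * Polynomial.X^(2*j+1))

noncomputable def Psi (n : ℕ) : ℚ[X] := Phi n - Polynomial.X^(2*n) * (1+Polynomial.X)

lemma key1 (n : ℕ) : Polynomial.X * Psi n = Bpoly n - 1 - Polynomial.X := by
  have h1 : Polynomial.X * Phi n - Bpoly n = (1+Polynomial.X) * (Polynomial.X^(2*n+1) - 1) := by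
    rw [Phi, Bpoly, Finset.mul_sum, ← Finset.sum_sub_distrib, ← clubs_poly n]
    refine Finset.sum_congr rfl fun j hj => ?_
    ring
  rw [Psi]
  linear_combination h1

lemma coeff_Bpoly (n s : ℕ) : (Bpoly n).coeff s
    = ∑ j ∈ range (n+1), cc n j * ((2*n-2*j).choose s : ℚ) := by
  rw [Bpoly, Polynomial.finset_sum_coeff]
  refine Finset.sum_congr rfl fun j hj => ?_
  rw [Polynomial.coeff_C_mul, Polynomial.coeff_one_add_X_pow]

lemma coeff_Psi (n t : ℕ) : (Psi n).coeff t
    = (Bpoly n).coeff (t+1) - (if t = 0 then 1 else 0) := by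
  have := congrArg (fun p => Polynomial.coeff p (t+1)) (key1 n)
  simp only [Polynomial.coeff_X_mul, Polynomial.coeff_sub, Polynomial.coeff_one,
    Polynomial.coeff_X] at this
  rw [this]
  by_cases ht : t = 0 <;> simp [ht]

lemma coeff_Phi (n : ℕ) (i : ℕ) (hi : i ≤ 2*n+1) :
    (Phi n).coeff i = (Bpoly n).coeff (2*n+1-i) := by
  rw [Phi, Polynomial.finset_sum_coeff, coeff_Bpoly]
  refine Finset.sum_congr rfl fun j hj => ?_
  rw [Finset.mem_range] at hj
  rw [Polynomial.coeff_C_mul, Polynomial.coeff_mul_X_pow']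
  by_cases hle : 2*j+1 ≤ i
  · rw [if_pos hle, Polynomial.coeff_one_add_X_pow]
    congr 1
    have h := Nat.choose_symm (n := 2*n-2*j) (k := i-(2*j+1)) (by omega)
    rw [show 2*n-2*j-(i-(2*j+1)) = 2*n+1-i by omega] at h
    exact_mod_cast congrArg (fun x : ℕ => (x : ℚ)) h.symm
  · rw [if_neg hle]
    have : (2*n-2*j).choose (2*n+1-i) = 0 := Nat.choose_eq_zero_of_lt (by omega)
    rw [this]
    norm_num

lemma Psi_deg (n : ℕ) : ∀ t, 2*n < t → (Psi n).coeff t = 0 := by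
  intro t ht
  rw [coeff_Psi, if_neg (by omega), sub_zero, coeff_Bpoly]
  refine Finset.sum_eq_zero fun j hj => ?_
  rw [Finset.mem_range] at hj
  rw [Nat.choose_eq_zero_of_lt (by omega)]
  norm_num

lemma Psi_sym (n : ℕ) : ∀ i, i ≤ 2*n → (Psi n).coeff i = (Psi n).coeff (2*n - i) := by
  intro i hi
  have h1 : (Psi n).coeff (2*n-i) = (Phi n).coeff (2*n-i) - (if i = 0 then 1 else 0) := by
    rw [Psi, Polynomial.coeff_sub]
    congr 1
    rw [mul_one_add, Polynomial.coeff_add, ← pow_succ]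
    rw [Polynomial.coeff_X_pow, Polynomial.coeff_X_pow]
    have h2 : ¬ (2*n - i = 2*n+1) := by omega
    rw [if_neg h2]
    by_cases hi0 : i = 0
    · subst hi0; simp
    · rw [if_neg (by omega), if_neg hi0]
      norm_num
  rw [h1, coeff_Phi n (2*n-i) (by omega), show 2*n+1-(2*n-i) = i+1 by omega, coeff_Psi]

lemma exists_Q : ∀ (N : ℕ) (ψ : ℚ[X]), (∀ t, 2*N < t → ψ.coeff t = 0) →
    (∀ i, i ≤ 2*N → ψ.coeff i = ψ.coeff (2*N - i)) →
    ∃ Q : ℚ[X], Q.natDegree ≤ N ∧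
      Polynomial.aeval (PowerSeries.X * Cs^2) ψ = Cs^(2*N) * (Q : PowerSeries ℚ) := by
  intro N
  induction N with
  | zero =>
    intro ψ hdeg _
    have hnd : ψ.natDegree ≤ 0 := Polynomial.natDegree_le_iff_coeff_eq_zero.mpr
      (fun t ht => hdeg t (by omega))
    have hC := Polynomial.eq_C_of_natDegree_le_zero hnd
    refine ⟨ψ, by omega, ?_⟩
    rw [hC]
    simp [Polynomial.coe_C, PowerSeries.algebraMap_apply]
  | succ N ihN =>
    intro ψ hdeg hsym
    set c0 := ψ.coeff 0 with hc0
    set r := ψ - Polynomial.C c0 * (1+Polynomial.X)^(2*(N+1)) with hr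
    have hrc : ∀ t, r.coeff t = ψ.coeff t - c0 * ((2*(N+1)).choose t : ℚ) := by
      intro t
      rw [hr, Polynomial.coeff_sub, Polynomial.coeff_C_mul, Polynomial.coeff_one_add_X_pow]
    have hr0 : r.coeff 0 = 0 := by rw [hrc]; simp [hc0]
    have hrdeg : ∀ t, 2*(N+1) < t → r.coeff t = 0 := by
      intro t ht
      rw [hrc, hdeg t ht, Nat.choose_eq_zero_of_lt ht]
      norm_num
    have hrsym : ∀ i, i ≤ 2*(N+1) → r.coeff i = r.coeff (2*(N+1) - i) := by
      intro i hi
      rw [hrc, hrc, hsym i hi]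
      have : (2*(N+1)).choose i = (2*(N+1)).choose (2*(N+1)-i) := by
        rw [← Nat.choose_symm hi]
      rw [this]
    have hrtop : r.coeff (2*(N+1)) = 0 := by
      have := hrsym (2*(N+1)) (le_refl _)
      rw [Nat.sub_self] at this
      rw [this, hr0]
    set s := r.divX with hs
    have hsc : ∀ t, s.coeff t = r.coeff (t+1) := fun t => Polynomial.coeff_divX
    have hrs : Polynomial.X * s = r := by
      have := Polynomial.X_mul_divX_add r
      rw [hr0] at this
      simpa using this
    have hsdeg : ∀ t, 2*N < t → s.coeff t = 0 := by
      intro t ht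
      rw [hsc]
      rcases Nat.lt_or_ge (2*(N+1)) (t+1) with h | h
      · exact hrdeg _ h
      · rw [show t+1 = 2*(N+1) by omega]
        exact hrtop
    have hssym : ∀ i, i ≤ 2*N → s.coeff i = s.coeff (2*N - i) := by
      intro i hi
      rw [hsc, hsc, hrsym (i+1) (by omega), show 2*(N+1)-(i+1) = (2*N-i)+1 by omega]
    obtain ⟨Q', hQ'd, hQ'⟩ := ihN s hsdeg hssym
    refine ⟨Polynomial.C c0 + Polynomial.X * Q', ?_, ?_⟩
    · refine le_trans (Polynomial.natDegree_add_le _ _) ?_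
      simp only [Polynomial.natDegree_C]
      refine max_le (by omega) (le_trans Polynomial.natDegree_mul_le ?_)
      rw [Polynomial.natDegree_X]
      omega
    · have hψ : ψ = Polynomial.C c0 * (1+Polynomial.X)^(2*(N+1)) + Polynomial.X * s := by
        rw [hrs, hr]; ring
      rw [hψ]
      rw [map_add, map_mul, map_mul, map_pow, map_add, map_one, Polynomial.aeval_X,
        Polynomial.aeval_C, hQ']
      have hCs : (1 : PowerSeries ℚ) + PowerSeries.X * Cs^2 = Cs := (Cs_eq).symm
      rw [hCs]
      push_cast [Polynomial.coe_add, Polynomial.coe_mul, Polynomial.coe_C, Polynomial.coe_X]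
      have halg : (algebraMap ℚ (PowerSeries ℚ)) c0 = PowerSeries.C (R := ℚ) c0 := rfl
      rw [halg]
      ring

lemma main_series (n : ℕ) : ∃ Q : ℚ[X], Q.natDegree ≤ n ∧
    (∑ j ∈ range (n+1), PowerSeries.C (R := ℚ) (cc n j) * (PowerSeries.X^(2*j+1) * Cs^(2*j+2)))
    = PowerSeries.X^(2*n) * Cs^(2*n+1) + (Q : PowerSeries ℚ) := by
  obtain ⟨Q, hd, hQ⟩ := exists_Q n (Psi n) (Psi_deg n) (Psi_sym n)
  have hexp : Polynomial.aeval (PowerSeries.X * Cs^2) (Psi n)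
      = Cs^(2*n) * ((∑ j ∈ range (n+1), PowerSeries.C (R := ℚ) (cc n j)
          * (PowerSeries.X^(2*j+1) * Cs^(2*j+2)))
        - PowerSeries.X^(2*n) * Cs^(2*n+1)) := by
    rw [Psi, map_sub, Phi, map_sum, mul_sub, Finset.mul_sum]
    congr 1
    · refine Finset.sum_congr rfl fun j hj => ?_
      rw [Finset.mem_range] at hj
      rw [map_mul, map_mul, map_pow, map_pow, map_add, map_one, Polynomial.aeval_X,
        Polynomial.aeval_C, ← Cs_eq]
      have halg : (algebraMap ℚ (PowerSeries ℚ)) (cc n j) = PowerSeries.C (R := ℚ) (cc n j) := rfl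
      rw [halg]
      set d := 2*n - 2*j with hdd
      have h2n : 2*n = d + 2*j := by omega
      rw [h2n]
      ring
    · rw [map_mul, map_pow, map_add, map_one, Polynomial.aeval_X, ← Cs_eq]
      ring
  rw [hexp] at hQ
  have hcancel := mul_left_cancel₀ (pow_ne_zero (2*n) Cs_ne_zero) hQ
  exact ⟨Q, hd, by linear_combination hcancel⟩

lemma coeff_rhs (n k : ℕ) (h : n < k) :
    PowerSeries.coeff (R := ℚ) k (PowerSeries.X^(2*n) * Cs^(2*n+1))
    = ((2 * n + 1 : ℚ) / (2 * k - 2 * n + 1 : ℚ)) * ((2 * k - 2 * n + 1).choose (k + 1) : ℚ) := by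
  rw [PowerSeries.coeff_X_pow_mul']
  by_cases hkn : 2*n ≤ k
  · rw [if_pos hkn, show 2*n+1 = (2*n)+1 from rfl, ballot]
    have e1 : 2*(k-2*n) + 2*n + 1 = 2*k-2*n+1 := by omega
    rw [e1]
    have e2 : (2*k-2*n+1).choose (k-2*n) = (2*k-2*n+1).choose (k+1) := by
      rw [show k-2*n = 2*k-2*n+1 - (k+1) by omega]
      exact Nat.choose_symm (by omega)
    rw [e2]
    have e3 : ((k - 2*n : ℕ) : ℚ) = (k : ℚ) - 2*n := by
      push_cast [Nat.cast_sub hkn]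
      ring
    rw [e3]
    congr 1
    push_cast
    ring_nf
  · rw [if_neg hkn]
    have : (2*k-2*n+1).choose (k+1) = 0 := Nat.choose_eq_zero_of_lt (by omega)
    rw [this]
    norm_num

lemma coeff_term (n k j : ℕ) (hj : j < k) :
    cc n j * PowerSeries.coeff (R := ℚ) k (PowerSeries.X^(2*j+1) * Cs^(2*j+2))
    = (1 / ((k : ℚ) - j)) * ((2 * k - 2 * j).choose (k + 1) : ℚ) *
        ((2 * n + 1).choose (2 * j + 1) : ℚ) * _root_.bernoulli (2 * n - 2 * j) := by
  rw [PowerSeries.coeff_X_pow_mul']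
  by_cases hle : 2*j+1 ≤ k
  · rw [if_pos hle, show 2*j+2 = (2*j+1)+1 from rfl, ballot]
    have e1 : 2*(k-(2*j+1)) + (2*j+1) + 1 = 2*k-2*j := by omega
    rw [e1]
    have e2 : (2*k-2*j).choose (k-(2*j+1)) = (2*k-2*j).choose (k+1) := by
      rw [show k-(2*j+1) = 2*k-2*j - (k+1) by omega]
      exact Nat.choose_symm (by omega)
    rw [e2]
    have e3 : ((k - (2*j+1) : ℕ) : ℚ) = (k : ℚ) - (2*j+1) := by
      push_cast [Nat.cast_sub hle]
      ring
    rw [e3, cc]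
    have d1 : ((j:ℚ)+1) ≠ 0 := by positivity
    have d2 : (2*((k:ℚ) - (2*j+1)) + (2*j+1) + 1) ≠ 0 := by
      have : (2*j+1 : ℚ) ≤ k := by exact_mod_cast hle
      intro hc
      have : (k:ℚ) = j := by linarith
      have : (j:ℚ) < k := by exact_mod_cast hj
      linarith
    have d3 : ((k:ℚ) - j) ≠ 0 := by
      have : (j:ℚ) < k := by exact_mod_cast hj
      intro hc; linarith
    push_cast
    rw [show (2*((k:ℚ) - (2*j+1)) + (2*j+1) + 1) = 2*((k:ℚ)-j) by ring]
    field_simp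
    ring
  · rw [if_neg hle]
    have : (2*k-2*j).choose (k+1) = 0 := Nat.choose_eq_zero_of_lt (by omega)
    rw [this]
    norm_num

end GVAux

theorem gessel_viennot (n k : ℕ) (h : n < k) :
    ∑ j ∈ range ((k - 1) / 2 + 1),
        (1 / ((k : ℚ) - j)) * ((2 * k - 2 * j).choose (k + 1) : ℚ) *
          ((2 * n + 1).choose (2 * j + 1) : ℚ) * bernoulli (2 * n - 2 * j) =
    ((2 * n + 1 : ℚ) / (2 * k - 2 * n + 1 : ℚ)) * ((2 * k - 2 * n + 1).choose (k + 1) : ℚ) := by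
  obtain ⟨Q, hQd, hS⟩ := main_series n
  have hco := congrArg (PowerSeries.coeff (R := ℚ) k) hS
  rw [map_sum, map_add] at hco
  have hQ0 : PowerSeries.coeff (R := ℚ) k (Q : PowerSeries ℚ) = 0 := by
    rw [Polynomial.coeff_coe]
    exact Polynomial.coeff_eq_zero_of_natDegree_lt (by omega)
  rw [hQ0, add_zero, coeff_rhs n k h] at hco
  have hterm : ∀ j ∈ range (n+1), PowerSeries.coeff (R := ℚ) k (PowerSeries.C (R := ℚ) (cc n j)
      * (PowerSeries.X^(2*j+1) * Cs^(2*j+2)))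
      = cc n j * PowerSeries.coeff (R := ℚ) k (PowerSeries.X^(2*j+1) * Cs^(2*j+2)) := fun j _ =>
    PowerSeries.coeff_C_mul k _ _
  rw [Finset.sum_congr rfl hterm] at hco
  -- extend both sums to range k
  have hsub1 : range (n+1) ⊆ range k := by
    intro x hx; rw [Finset.mem_range] at *; omega
  have hext1 : ∑ j ∈ range k, cc n j
        * PowerSeries.coeff (R := ℚ) k (PowerSeries.X^(2*j+1) * Cs^(2*j+2))
      = ∑ j ∈ range (n+1), cc n j
        * PowerSeries.coeff (R := ℚ) k (PowerSeries.X^(2*j+1) * Cs^(2*j+2)) := by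
    refine (Finset.sum_subset hsub1 ?_).symm
    intro j hjk hjn
    rw [Finset.mem_range] at hjk
    rw [Finset.mem_range, not_lt] at hjn
    have hz : ((2*n+1).choose (2*j+1) : ℚ) = 0 := by
      rw [Nat.choose_eq_zero_of_lt (by omega)]; norm_num
    rw [cc, hz]
    norm_num
  have hsub2 : range ((k-1)/2 + 1) ⊆ range k := by
    intro x hx; rw [Finset.mem_range] at *; omega
  have hext2 : ∑ j ∈ range k,
        (1 / ((k : ℚ) - j)) * ((2 * k - 2 * j).choose (k + 1) : ℚ) *
          ((2 * n + 1).choose (2 * j + 1) : ℚ) * bernoulli (2 * n - 2 * j)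
      = ∑ j ∈ range ((k-1)/2 + 1),
        (1 / ((k : ℚ) - j)) * ((2 * k - 2 * j).choose (k + 1) : ℚ) *
          ((2 * n + 1).choose (2 * j + 1) : ℚ) * bernoulli (2 * n - 2 * j) := by
    refine (Finset.sum_subset hsub2 ?_).symm
    intro j hjk hjr
    rw [Finset.mem_range] at hjk
    rw [Finset.mem_range, not_lt] at hjr
    have h2j : ¬ (2*j+1 ≤ k) := by omega
    have hz : ((2*k-2*j).choose (k+1) : ℚ) = 0 := by
      rw [Nat.choose_eq_zero_of_lt (by omega)]; norm_num
    rw [hz]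
    norm_num
  rw [← hext1] at hco
  rw [← hext2, ← hco]
  refine Finset.sum_congr rfl fun j hjk => ?_
  rw [Finset.mem_range] at hjk
  exact (coeff_term n k j hjk).symm
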